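/- arXiv:2210.07703 — 3 statements merged into one kernel-verified Lean document; each statement's English description precedes it below -/
import Mathlib

section
/- Let f : ℝ^d → ℝ be differentiable with L-Lipschitz gradient and let ν > 0. Then for every x ∈ ℝ^d, ‖∇f_ν(x) − ∇f(x)‖ ≤ (ν/2) · L · (d + 3)^{3/2}. -/
open MeasureTheory ProbabilityTheory

/-- The standard Gaussian measure `N(0, I_d)` on `ℝ^d = EuclideanSpace ℝ (Fin d)`. -/
noncomputable def stdGaussian (d : ℕ) : Measure (EuclideanSpace ℝ (Fin d)) :=
  (Measure.pi fun _ : Fin d => gaussianReal 0 1).map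
    (MeasurableEquiv.toLp 2 (Fin d → ℝ))

/-- The Gaussian smoothing `f_ν(x) = E_{u ∼ N(0,I_d)}[f(x + ν u)]`. -/
noncomputable def gaussianSmoothing (d : ℕ) (f : EuclideanSpace ℝ (Fin d) → ℝ) (ν : ℝ)
    (x : EuclideanSpace ℝ (Fin d)) : ℝ :=
  ∫ u, f (x + ν • u) ∂(stdGaussian d)

open Real InnerProductSpace Metric


lemma pdf_sq_bound (x : ℝ) :
    gaussianPDFReal 0 1 x * x ^ 2 ≤ (√(2 * π))⁻¹ * (2 * Real.exp (-(1/4) * x ^ 2)) := by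
  have h8 : x ^ 2 / 8 + 1 ≤ Real.exp (x ^ 2 / 8) := Real.add_one_le_exp _
  have hkey : x ^ 2 ≤ 2 * Real.exp (x ^ 2 / 4) := by
    have h2 : Real.exp (x ^ 2 / 4) = Real.exp (x ^ 2 / 8) ^ 2 := by
      rw [← Real.exp_nat_mul]; ring_nf
    nlinarith [Real.exp_pos (x ^ 2 / 8), sq_nonneg (x ^ 2 - 8), sq_nonneg x]
  have hexp : Real.exp (-(x - 0) ^ 2 / (2 * ((1:NNReal):ℝ))) * x ^ 2
      ≤ 2 * Real.exp (-(1/4) * x ^ 2) := by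
    have heq : Real.exp (-(x - 0) ^ 2 / (2 * ((1:NNReal):ℝ))) = Real.exp (-(x^2)/2) := by
      norm_num
    rw [heq]
    have hpos : 0 < Real.exp (-(x ^ 2) / 2) := Real.exp_pos _
    calc Real.exp (-(x^2)/2) * x ^ 2 ≤ Real.exp (-(x^2)/2) * (2 * Real.exp (x ^ 2 / 4)) :=
          mul_le_mul_of_nonneg_left hkey hpos.le
      _ = 2 * (Real.exp (-(x^2)/2) * Real.exp (x ^ 2 / 4)) := by ring
      _ = 2 * Real.exp (-(1/4) * x ^ 2) := by rw [← Real.exp_add]; ring_nf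
  have hc : (0:ℝ) ≤ (√(2 * π * ((1:NNReal):ℝ)))⁻¹ := by positivity
  have : gaussianPDFReal 0 1 x * x ^ 2
      ≤ (√(2 * π * ((1:NNReal):ℝ)))⁻¹ * (2 * Real.exp (-(1/4) * x ^ 2)) := by
    rw [gaussianPDFReal, mul_assoc]
    exact mul_le_mul_of_nonneg_left hexp hc
  simpa [NNReal.coe_one] using this

lemma gauss_withDensity : gaussianReal 0 1
    = (volume : Measure ℝ).withDensity fun x => ((gaussianPDFReal 0 1 x).toNNReal : ENNReal) :=
  gaussianReal_of_var_ne_zero 0 one_ne_zero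

lemma integrable_sq_gauss : Integrable (fun x : ℝ => x ^ 2) (gaussianReal 0 1) := by
  rw [gauss_withDensity]
  have fmeas : Measurable fun x : ℝ => (gaussianPDFReal 0 1 x).toNNReal :=
    (measurable_gaussianPDFReal 0 1).real_toNNReal
  rw [integrable_withDensity_iff_integrable_smul fmeas]
  apply Integrable.mono'
    (((integrable_exp_neg_mul_sq (by norm_num : (0:ℝ) < 1/4)).const_mul 2).const_mul (√(2 * π))⁻¹)
  · exact (fmeas.coe_nnreal_real.smul (measurable_id.pow_const 2)).aestronglyMeasurable
  · refine Filter.Eventually.of_forall fun x => ?_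
    have hpdf : (0:ℝ) ≤ gaussianPDFReal 0 1 x := gaussianPDFReal_nonneg 0 1 x
    have heq : (gaussianPDFReal 0 1 x).toNNReal • (x ^ 2) = gaussianPDFReal 0 1 x * x ^ 2 := by
      rw [NNReal.smul_def, Real.coe_toNNReal _ hpdf, smul_eq_mul]
    rw [Real.norm_eq_abs, abs_of_nonneg (by rw [heq]; positivity), heq]
    simpa [mul_assoc] using pdf_sq_bound x

lemma integral_sq_gauss_le : ∫ x, x ^ 2 ∂(gaussianReal 0 1) ≤ 3 := by
  have fmeas : Measurable fun x : ℝ => (gaussianPDFReal 0 1 x).toNNReal :=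
    (measurable_gaussianPDFReal 0 1).real_toNNReal
  rw [gauss_withDensity, integral_withDensity_eq_integral_smul fmeas]
  have hint : Integrable (fun x : ℝ => (gaussianPDFReal 0 1 x).toNNReal • x ^ 2) volume := by
    have := integrable_sq_gauss
    rw [gauss_withDensity, integrable_withDensity_iff_integrable_smul fmeas] at this
    exact this
  have h2 : ∫ x : ℝ, (gaussianPDFReal 0 1 x).toNNReal • x ^ 2
      ≤ ∫ x : ℝ, (√(2 * π))⁻¹ * (2 * Real.exp (-(1/4) * x ^ 2)) := by
    apply integral_mono hint
      (((integrable_exp_neg_mul_sq (by norm_num : (0:ℝ) < 1/4)).const_mul 2).const_mul (√(2 * π))⁻¹)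
    intro x
    have hpdf : (0:ℝ) ≤ gaussianPDFReal 0 1 x := gaussianPDFReal_nonneg 0 1 x
    have heq : (gaussianPDFReal 0 1 x).toNNReal • (x ^ 2) = gaussianPDFReal 0 1 x * x ^ 2 := by
      rw [NNReal.smul_def, Real.coe_toNNReal _ hpdf, smul_eq_mul]
    simp only []; rw [heq]; exact pdf_sq_bound x
  refine h2.trans ?_
  rw [MeasureTheory.integral_const_mul, MeasureTheory.integral_const_mul, integral_gaussian]
  have hπ : (0:ℝ) < π := Real.pi_pos
  have h4 : √(π / (1/4)) = 2 * √π := by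
    rw [show π / (1/4 : ℝ) = 2^2 * π by ring, Real.sqrt_mul (by positivity), Real.sqrt_sq (by norm_num)]
  have h2π : √(2 * π) = √2 * √π := Real.sqrt_mul (by norm_num) π
  rw [h4, h2π]
  have hs2 : (0:ℝ) < √2 := Real.sqrt_pos.mpr (by norm_num)
  have hsπ : (0:ℝ) < √π := Real.sqrt_pos.mpr hπ
  rw [inv_mul_le_iff₀ (by positivity)]
  nlinarith [Real.sq_sqrt (by norm_num : (0:ℝ) ≤ 2), Real.sq_sqrt hπ.le]



instance stdGaussian_prob (d : ℕ) : IsProbabilityMeasure (stdGaussian d) :=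
  Measure.isProbabilityMeasure_map (MeasurableEquiv.measurable _).aemeasurable

lemma pi_map_eval (d : ℕ) (i : Fin d) :
    (Measure.pi fun _ : Fin d => gaussianReal 0 1).map (Function.eval i) = gaussianReal 0 1 := by
  refine Measure.ext fun s hs => ?_
  rw [Measure.map_apply (measurable_pi_apply i) hs]
  rw [show Function.eval i ⁻¹' s = Set.pi Set.univ (Function.update (fun _ : Fin d => (Set.univ : Set ℝ)) i s)
    from Set.eval_preimage]
  rw [Measure.pi_pi]
  rw [Finset.prod_eq_single i (fun j _ hj => by simp [Function.update_of_ne hj])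
    (by simp)]
  simp

lemma integrable_eval_sq (d : ℕ) (i : Fin d) :
    Integrable (fun y : Fin d → ℝ => (y i) ^ 2) (Measure.pi fun _ : Fin d => gaussianReal 0 1) := by
  have h : Integrable (fun x : ℝ => x ^ 2)
      ((Measure.pi fun _ : Fin d => gaussianReal 0 1).map (Function.eval i)) := by
    rw [pi_map_eval]; exact integrable_sq_gauss
  exact (integrable_map_measure (measurable_id.pow_const 2).aestronglyMeasurable (measurable_pi_apply i).aemeasurable).1 h

lemma integral_eval_sq (d : ℕ) (i : Fin d) :
    ∫ y : Fin d → ℝ, (y i) ^ 2 ∂(Measure.pi fun _ : Fin d => gaussianReal 0 1)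
      = ∫ x, x ^ 2 ∂(gaussianReal 0 1) := by
  have h := integral_map (μ := Measure.pi fun _ : Fin d => gaussianReal 0 1)
    (φ := Function.eval i) (f := fun x : ℝ => x ^ 2)
    (measurable_pi_apply i).aemeasurable (measurable_id.pow_const 2).aestronglyMeasurable
  rw [pi_map_eval] at h
  exact h.symm

lemma norm_sq_eq (d : ℕ) (u : EuclideanSpace ℝ (Fin d)) : ‖u‖ ^ 2 = ∑ i, (u i) ^ 2 := by
  rw [EuclideanSpace.norm_eq, Real.sq_sqrt (Finset.sum_nonneg fun i _ => sq_nonneg _)]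
  simp [Real.norm_eq_abs, sq_abs]

lemma integrable_normsq_std (d : ℕ) :
    Integrable (fun u : EuclideanSpace ℝ (Fin d) => ‖u‖ ^ 2) (stdGaussian d) := by
  rw [_root_.stdGaussian, integrable_map_equiv]
  have : ((MeasurableEquiv.toLp 2 (Fin d → ℝ)) : (Fin d → ℝ) → EuclideanSpace ℝ (Fin d))
      = fun y => WithLp.toLp 2 y := rfl
  simp only [Function.comp_def]
  have heq : ∀ y : Fin d → ℝ,
      ‖(MeasurableEquiv.toLp 2 (Fin d → ℝ)) y‖ ^ 2 = ∑ i, (y i) ^ 2 := by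
    intro y; rw [norm_sq_eq]; rfl
  refine (integrable_congr (Filter.Eventually.of_forall fun y => (heq y).symm)).mp ?_
  exact integrable_finset_sum _ fun i _ => integrable_eval_sq d i

lemma integral_normsq_std_le (d : ℕ) :
    ∫ u, ‖u‖ ^ 2 ∂(stdGaussian d) ≤ 3 * d := by
  rw [_root_.stdGaussian, integral_map_equiv]
  have heq : ∀ y : Fin d → ℝ,
      ‖(MeasurableEquiv.toLp 2 (Fin d → ℝ)) y‖ ^ 2 = ∑ i, (y i) ^ 2 := by
    intro y; rw [norm_sq_eq]; rfl
  rw [integral_congr_ae (Filter.Eventually.of_forall fun y => heq y)]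
  rw [integral_finset_sum _ fun i _ => integrable_eval_sq d i]
  calc ∑ i : Fin d, ∫ y : Fin d → ℝ, (y i) ^ 2 ∂(Measure.pi fun _ : Fin d => gaussianReal 0 1)
      = ∑ _i : Fin d, ∫ x, x ^ 2 ∂(gaussianReal 0 1) := by
        exact Finset.sum_congr rfl fun i _ => integral_eval_sq d i
    _ ≤ ∑ _i : Fin d, (3:ℝ) := Finset.sum_le_sum fun i _ => integral_sq_gauss_le
    _ = 3 * d := by simp [mul_comm]



variable {d : ℕ}

local notation "E" => EuclideanSpace ℝ (Fin d)

lemma toDual_gradient' (f : E → ℝ) (z : E) :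
    (toDual ℝ (EuclideanSpace ℝ (Fin d))) (gradient f z) = fderiv ℝ f z :=
  LinearIsometryEquiv.apply_symm_apply _ _

lemma norm_fderiv_sub_eq (f : E → ℝ) (a b : E) :
    ‖fderiv ℝ f a - fderiv ℝ f b‖ = ‖gradient f a - gradient f b‖ := by
  rw [← toDual_gradient' f a, ← toDual_gradient' f b, ← map_sub]
  exact LinearIsometryEquiv.norm_map _ _

lemma norm_fderiv_eq (f : E → ℝ) (a : E) : ‖fderiv ℝ f a‖ = ‖gradient f a‖ := by
  rw [← toDual_gradient' f a]; exact LinearIsometryEquiv.norm_map _ _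

lemma integrable_norm_std : Integrable (fun u : E => ‖u‖) (stdGaussian d) := by
  apply Integrable.mono' ((integrable_const (1:ℝ)).add (integrable_normsq_std d))
  · exact continuous_norm.aestronglyMeasurable
  · refine Filter.Eventually.of_forall fun u => ?_
    rw [norm_norm]
    simp only [Pi.add_apply]
    nlinarith [sq_nonneg (‖u‖ - 1), norm_nonneg u]

lemma integral_norm_std_le : ∫ u : E, ‖u‖ ∂(stdGaussian d) ≤ (1 + 3 * d) / 2 := by
  have h1 : ∫ u : E, ‖u‖ ∂(stdGaussian d)
      ≤ ∫ u : E, (1 + ‖u‖ ^ 2) / 2 ∂(stdGaussian d) := by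
    apply integral_mono integrable_norm_std
      (((integrable_const (1:ℝ)).add (integrable_normsq_std d)).div_const 2)
    intro u
    simp only [Pi.add_apply]
    nlinarith [sq_nonneg (‖u‖ - 1), norm_nonneg u]
  refine h1.trans ?_
  rw [integral_div, integral_add (integrable_const _) (integrable_normsq_std d),
    integral_const]
  simp only [measure_univ, probReal_univ, ENNReal.toReal_one, smul_eq_mul, one_mul, mul_one]
  have := integral_normsq_std_le d
  linarith

/-- If `f : ℝ^d → ℝ` is differentiable with `L`-Lipschitz gradient and
`ν > 0`, then for every `x`, `‖∇f_ν(x) − ∇f(x)‖ ≤ (ν/2) L (d+3)^(3/2)`. -/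
theorem norm_gradient_gaussianSmoothing_sub_le (d : ℕ) (L ν : ℝ) (hL : 0 < L) (hν : 0 < ν)
    (f : EuclideanSpace ℝ (Fin d) → ℝ) (hf : Differentiable ℝ f)
    (hLip : ∀ x y, ‖gradient f x - gradient f y‖ ≤ L * ‖x - y‖)
    (x : EuclideanSpace ℝ (Fin d)) :
    ‖gradient (gaussianSmoothing d f ν) x - gradient f x‖
      ≤ ν / 2 * L * ((d : ℝ) + 3) ^ ((3 : ℝ) / 2) := by
  set μ := stdGaussian d with hμ
  have hfd_norm : ∀ a : EuclideanSpace ℝ (Fin d),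
      ‖fderiv ℝ f a‖ ≤ ‖gradient f x‖ + L * ‖a - x‖ := fun a => by
    rw [norm_fderiv_eq]
    calc ‖gradient f a‖ = ‖(gradient f a - gradient f x) + gradient f x‖ := by rw [sub_add_cancel]
      _ ≤ ‖gradient f a - gradient f x‖ + ‖gradient f x‖ := norm_add_le _ _
      _ ≤ ‖gradient f x‖ + L * ‖a - x‖ := by have := hLip a x; linarith
  have hgradCont : Continuous (gradient f) := by
    apply LipschitzWith.continuous (K := L.toNNReal)
    apply LipschitzWith.of_dist_le_mul
    intro a b
    rw [Real.coe_toNNReal _ hL.le, dist_eq_norm, dist_eq_norm]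
    exact hLip a b
  have hfderivCont : Continuous (fun z : EuclideanSpace ℝ (Fin d) => fderiv ℝ f z) := by
    have h : (fun z : EuclideanSpace ℝ (Fin d) => fderiv ℝ f z)
        = (toDual ℝ (EuclideanSpace ℝ (Fin d))) ∘ gradient f := by
      funext z; exact (toDual_gradient' f z).symm
    rw [h]
    exact (toDual ℝ _).continuous.comp hgradCont
  have h_diff : ∀ (u y : EuclideanSpace ℝ (Fin d)),
      HasFDerivAt (fun z => f (z + ν • u)) (fderiv ℝ f (y + ν • u)) y := by
    intro u y
    have h1 : HasFDerivAt (fun z : EuclideanSpace ℝ (Fin d) => z + ν • u)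
        (ContinuousLinearMap.id ℝ _) y := (hasFDerivAt_id y).add_const _
    have h2 := (hf (y + ν • u)).hasFDerivAt.comp y h1
    rw [ContinuousLinearMap.comp_id] at h2
    exact h2
  have hnorm_smul : ∀ u : EuclideanSpace ℝ (Fin d), ‖ν • u‖ = ν * ‖u‖ := fun u => by
    rw [norm_smul, Real.norm_eq_abs, abs_of_pos hν]
  set bound : EuclideanSpace ℝ (Fin d) → ℝ := fun u => ‖gradient f x‖ + L * (ν * ‖u‖ + 1)
    with hbound
  have hbound_nonneg : ∀ u, 0 ≤ bound u := fun u => by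
    show (0:ℝ) ≤ ‖gradient f x‖ + L * (ν * ‖u‖ + 1)
    have h1 : 0 ≤ ν * ‖u‖ := by positivity
    have h2 : (0:ℝ) ≤ ‖gradient f x‖ := norm_nonneg _
    nlinarith
  have hbound_int : Integrable bound μ := by
    have h : bound = fun u => (‖gradient f x‖ + L) + (L * ν) * ‖u‖ := by
      funext u; rw [hbound]; ring
    rw [h]
    exact (integrable_const _).add (integrable_norm_std.const_mul _)
  have key := hasFDerivAt_integral_of_dominated_loc_of_lip
    (F := fun y u => f (y + ν • u)) (F' := fun u => fderiv ℝ f (x + ν • u))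
    (μ := μ) (x₀ := x) (bound := bound) (s := ball x 1) (ball_mem_nhds x one_pos)
    (Filter.Eventually.of_forall fun y =>
      (hf.continuous.comp (by fun_prop : Continuous fun u : EuclideanSpace ℝ (Fin d) => y + ν • u)).aestronglyMeasurable)
    ?hFint
    ((hfderivCont.comp (by fun_prop : Continuous fun u : EuclideanSpace ℝ (Fin d) => x + ν • u)).aestronglyMeasurable)
    ?hlip hbound_int
    (Filter.Eventually.of_forall fun u => h_diff u x)
  case hFint =>
    apply Integrable.mono'
      ((integrable_const (|f x|)).add
        ((integrable_norm_std.const_mul (ν * ‖gradient f x‖)).add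
          ((integrable_normsq_std d).const_mul (L * ν ^ 2))))
    · exact (hf.continuous.comp
        (by fun_prop : Continuous fun u : EuclideanSpace ℝ (Fin d) => x + ν • u)).aestronglyMeasurable
    · refine Filter.Eventually.of_forall fun u => ?_
      have hmem : x + ν • u ∈ closedBall x (ν * ‖u‖) := by
        rw [mem_closedBall, dist_eq_norm, add_sub_cancel_left, hnorm_smul]
      have hmvt := (convex_closedBall x (ν * ‖u‖)).norm_image_sub_le_of_norm_fderiv_le
        (fun z _ => hf z) (C := ‖gradient f x‖ + L * (ν * ‖u‖))
        (fun z hz => by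
          refine (hfd_norm z).trans ?_
          have hz' : ‖z - x‖ ≤ ν * ‖u‖ := by rwa [mem_closedBall, dist_eq_norm] at hz
          nlinarith)
        (mem_closedBall_self (by positivity)) hmem
      rw [add_sub_cancel_left, hnorm_smul] at hmvt
      rw [Real.norm_eq_abs]
      have habs : |f (x + ν • u)| - |f x| ≤ |f (x + ν • u) - f x| :=
        abs_sub_abs_le_abs_sub _ _
      rw [Real.norm_eq_abs] at hmvt
      simp only [Pi.add_apply]
      have hexp : (‖gradient f x‖ + L * (ν * ‖u‖)) * (ν * ‖u‖)
          = ν * ‖gradient f x‖ * ‖u‖ + L * ν ^ 2 * ‖u‖ ^ 2 := by ring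
      nlinarith
  case hlip =>
    refine Filter.Eventually.of_forall fun u => ?_
    have hlipf : LipschitzOnWith (Real.nnabs (bound u)) f (ball (x + ν • u) 1) := by
      apply (convex_ball (x + ν • u) 1).lipschitzOnWith_of_nnnorm_fderiv_le (fun z _ => hf z)
      intro z hz
      rw [← NNReal.coe_le_coe, coe_nnnorm, Real.coe_nnabs, abs_of_nonneg (hbound_nonneg u)]
      refine (hfd_norm z).trans ?_
      rw [mem_ball, dist_eq_norm] at hz
      have h1 : ‖z - x‖ ≤ ‖z - (x + ν • u)‖ + ‖ν • u‖ := by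
        calc ‖z - x‖ = ‖(z - (x + ν • u)) + ((x + ν • u) - x)‖ := by rw [sub_add_sub_cancel]
          _ ≤ ‖z - (x + ν • u)‖ + ‖(x + ν • u) - x‖ := norm_add_le _ _
          _ = ‖z - (x + ν • u)‖ + ‖ν • u‖ := by rw [add_sub_cancel_left]
      rw [hnorm_smul] at h1
      show ‖gradient f x‖ + L * ‖z - x‖ ≤ ‖gradient f x‖ + L * (ν * ‖u‖ + 1)
      nlinarith [hz.le]
    have htrans : LipschitzWith 1 (fun y : EuclideanSpace ℝ (Fin d) => y + ν • u) := by
      have : Isometry (fun y : EuclideanSpace ℝ (Fin d) => y + ν • u) :=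
        Isometry.of_dist_eq fun a b => by
          rw [dist_eq_norm, dist_eq_norm]; congr 1; abel
      exact this.lipschitz
    have hmaps : Set.MapsTo (fun y : EuclideanSpace ℝ (Fin d) => y + ν • u)
        (ball x 1) (ball (x + ν • u) 1) := by
      intro y hy
      rw [mem_ball, dist_eq_norm] at hy ⊢
      calc ‖y + ν • u - (x + ν • u)‖ = ‖y - x‖ := by congr 1; abel
        _ < 1 := hy
    have := hlipf.comp (htrans.lipschitzOnWith (s := ball x 1)) hmaps
    rwa [mul_one] at this
  obtain ⟨hF'int, hderiv⟩ := key
  -- identify the gradient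
  have hsm : HasFDerivAt (gaussianSmoothing d f ν)
      (∫ u, fderiv ℝ f (x + ν • u) ∂μ) x := hderiv
  have hgrad_eq : gradient (gaussianSmoothing d f ν) x
      = (toDual ℝ (EuclideanSpace ℝ (Fin d))).symm (∫ u, fderiv ℝ f (x + ν • u) ∂μ) := by
    rw [gradient, hsm.fderiv]
  have hgradf : gradient f x
      = (toDual ℝ (EuclideanSpace ℝ (Fin d))).symm (fderiv ℝ f x) := rfl
  rw [hgrad_eq, hgradf, ← map_sub]
  rw [LinearIsometryEquiv.norm_map]
  have hsub : (∫ u, fderiv ℝ f (x + ν • u) ∂μ) - fderiv ℝ f x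
      = ∫ u, (fderiv ℝ f (x + ν • u) - fderiv ℝ f x) ∂μ := by
    rw [integral_sub hF'int (integrable_const _), integral_const, probReal_univ,
      one_smul]
  rw [hsub]
  have hptwise : ∀ u : EuclideanSpace ℝ (Fin d),
      ‖fderiv ℝ f (x + ν • u) - fderiv ℝ f x‖ ≤ L * ν * ‖u‖ := fun u => by
    rw [norm_fderiv_sub_eq]
    calc ‖gradient f (x + ν • u) - gradient f x‖ ≤ L * ‖x + ν • u - x‖ := hLip _ _
      _ = L * ν * ‖u‖ := by rw [add_sub_cancel_left, hnorm_smul]; ring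
  calc ‖∫ u, (fderiv ℝ f (x + ν • u) - fderiv ℝ f x) ∂μ‖
      ≤ ∫ u, ‖fderiv ℝ f (x + ν • u) - fderiv ℝ f x‖ ∂μ := norm_integral_le_integral_norm _
    _ ≤ ∫ u, L * ν * ‖u‖ ∂μ := by
        apply integral_mono (hF'int.sub (integrable_const _)).norm
          (integrable_norm_std.const_mul _) hptwise
    _ = L * ν * ∫ u : EuclideanSpace ℝ (Fin d), ‖u‖ ∂μ := by
        rw [integral_const_mul]
    _ ≤ L * ν * ((1 + 3 * d) / 2) := by
        apply mul_le_mul_of_nonneg_left integral_norm_std_le (by positivity)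
    _ ≤ ν / 2 * L * ((d : ℝ) + 3) ^ ((3 : ℝ) / 2) := by
        have hkey : (1 + 3 * (d:ℝ)) ≤ ((d : ℝ) + 3) ^ ((3 : ℝ) / 2) := by
          have hd : (0:ℝ) ≤ (d:ℝ) := Nat.cast_nonneg d
          have h1 : ((d : ℝ) + 3) ^ ((3 : ℝ) / 2) = Real.sqrt (((d:ℝ) + 3) ^ 3) := by
            rw [Real.sqrt_eq_rpow, ← Real.rpow_natCast ((d:ℝ)+3) 3,
              ← Real.rpow_mul (by linarith)]
            norm_num
          rw [h1, show (1 + 3*(d:ℝ)) = Real.sqrt ((1+3*(d:ℝ))^2) from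
            (Real.sqrt_sq (by linarith)).symm]
          apply Real.sqrt_le_sqrt
          nlinarith
        calc L * ν * ((1 + 3 * d) / 2) = ν / 2 * L * (1 + 3 * d) := by ring
          _ ≤ ν / 2 * L * ((d : ℝ) + 3) ^ ((3 : ℝ) / 2) := by
            apply mul_le_mul_of_nonneg_left hkey (by positivity)
end

section
/- Let f : ℝ^d → ℝ be differentiable with L-Lipschitz gradient and let ν > 0. Then for every x ∈ ℝ^d, (1/ν²) · E_u[(f(x + νu) − f(x))² · ‖u‖²] ≤ (ν²/2) · L² · (d + 6)³ + 2(d + 4) · ‖∇f(x)‖², where u is a standard Gaussian vector on ℝ^d. -/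
open MeasureTheory ProbabilityTheory

section AuxGaussian

open Filter Real
open scoped ENNReal NNReal

noncomputable def Jg (n : ℕ) : ℝ := ∫ x : ℝ, x ^ n * Real.exp (-(x ^ 2 / 2))

lemma abs_pow_mul_exp_le (n : ℕ) (x : ℝ) :
    |x| ^ n * Real.exp (-(x ^ 2 / 2)) ≤ n.factorial * Real.exp 1 * Real.exp (-(x ^ 2 / 4)) := by
  have h1 : |x| ^ n ≤ n.factorial * Real.exp |x| := by
    have h2 : |x| ^ n / n.factorial ≤ Real.exp |x| := by
      refine le_trans ?_ (Real.sum_le_exp_of_nonneg (abs_nonneg x) (n + 1))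
      refine Finset.single_le_sum (f := fun i => |x| ^ i / i.factorial) ?_ (Finset.self_mem_range_succ n)
      intro i _
      positivity
    have hfac : (0:ℝ) < n.factorial := by positivity
    calc |x| ^ n = n.factorial * (|x| ^ n / n.factorial) := by field_simp
    _ ≤ n.factorial * Real.exp |x| := by
        exact mul_le_mul_of_nonneg_left h2 (le_of_lt hfac)
  calc |x| ^ n * Real.exp (-(x ^ 2 / 2))
      ≤ (n.factorial * Real.exp |x|) * Real.exp (-(x ^ 2 / 2)) := by
        exact mul_le_mul_of_nonneg_right h1 (Real.exp_pos _).le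
    _ = n.factorial * Real.exp (|x| - x ^ 2 / 2) := by rw [mul_assoc, ← Real.exp_add]; ring_nf
    _ ≤ n.factorial * Real.exp (1 - x ^ 2 / 4) := by
        have : |x| - x ^ 2 / 2 ≤ 1 - x ^ 2 / 4 := by
          nlinarith [sq_abs x, sq_nonneg (|x| - 2)]
        exact mul_le_mul_of_nonneg_left (Real.exp_le_exp.2 this) (by positivity)
    _ = n.factorial * Real.exp 1 * Real.exp (-(x ^ 2 / 4)) := by
        rw [mul_assoc, ← Real.exp_add]; ring_nf

lemma integrable_pow_gauss (n : ℕ) :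
    Integrable (fun x : ℝ => x ^ n * Real.exp (-(x ^ 2 / 2))) := by
  have hi : Integrable (fun x : ℝ => Real.exp (-(4⁻¹ : ℝ) * x ^ 2)) :=
    integrable_exp_neg_mul_sq (by norm_num)
  refine Integrable.mono' ((hi.const_mul (n.factorial * Real.exp 1))) ?_ ?_
  · exact ((continuous_pow n).mul (Continuous.rexp (by continuity))).aestronglyMeasurable
  · refine Filter.Eventually.of_forall fun x => ?_
    have := abs_pow_mul_exp_le n x
    rw [Real.norm_eq_abs, abs_mul, abs_pow, abs_of_nonneg (Real.exp_pos _).le]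
    calc |x| ^ n * Real.exp (-(x ^ 2 / 2)) ≤ n.factorial * Real.exp 1 * Real.exp (-(x ^ 2 / 4)) := this
      _ = n.factorial * Real.exp 1 * Real.exp (-(4⁻¹:ℝ) * x ^ 2) := by ring_nf


lemma gaussExpQuarter_tendsto_atTop : Tendsto (fun x : ℝ => Real.exp (-(x ^ 2 / 4))) atTop (nhds 0) :=
  Real.tendsto_exp_atBot.comp (tendsto_neg_atTop_atBot.comp
    ((tendsto_pow_atTop (by norm_num : (2:ℕ) ≠ 0)).atTop_div_const (by norm_num)))
lemma gaussExpQuarter_tendsto_atBot : Tendsto (fun x : ℝ => Real.exp (-(x ^ 2 / 4))) atBot (nhds 0) := by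
  have := gaussExpQuarter_tendsto_atTop.comp tendsto_neg_atBot_atTop
  simpa [Function.comp_def, neg_sq] using this


lemma F_tendsto_atTop (n : ℕ) :
    Tendsto (fun x : ℝ => -(x ^ (n+1) * Real.exp (-(x ^ 2 / 2)))) atTop (nhds 0) := by
  rw [← neg_zero]
  apply Tendsto.neg
  refine squeeze_zero_norm (fun x => ?_) (by simpa using (gaussExpQuarter_tendsto_atTop.const_mul ((n+1).factorial * Real.exp 1)))
  rw [Real.norm_eq_abs, abs_mul, abs_pow, abs_of_nonneg (Real.exp_pos _).le]
  exact abs_pow_mul_exp_le (n+1) x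

lemma F_tendsto_atBot (n : ℕ) :
    Tendsto (fun x : ℝ => -(x ^ (n+1) * Real.exp (-(x ^ 2 / 2)))) atBot (nhds 0) := by
  rw [← neg_zero]
  apply Tendsto.neg
  refine squeeze_zero_norm (fun x => ?_) (by simpa using (gaussExpQuarter_tendsto_atBot.const_mul ((n+1).factorial * Real.exp 1)))
  rw [Real.norm_eq_abs, abs_mul, abs_pow, abs_of_nonneg (Real.exp_pos _).le]
  exact abs_pow_mul_exp_le (n+1) x

lemma F_hasDeriv (n : ℕ) (x : ℝ) :
    HasDerivAt (fun x : ℝ => -(x ^ (n+1) * Real.exp (-(x ^ 2 / 2))))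
      (x ^ (n+2) * Real.exp (-(x ^ 2 / 2)) - (n+1) * (x ^ n * Real.exp (-(x ^ 2 / 2)))) x := by
  have h1 : HasDerivAt (fun x : ℝ => x ^ (n+1)) ((n+1) * x ^ n) x := by
    simpa using hasDerivAt_pow (n+1) x
  have h2 : HasDerivAt (fun x : ℝ => Real.exp (-(x ^ 2 / 2))) (Real.exp (-(x ^ 2 / 2)) * (-x)) x := by
    have : HasDerivAt (fun x : ℝ => -(x ^ 2 / 2)) (-x) x := by
      have := (hasDerivAt_pow 2 x).div_const 2
      simpa using this.fun_neg
    exact this.exp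
  have := (h1.fun_mul h2).fun_neg
  refine this.congr_deriv ?_
  push_cast
  ring

lemma Jg_rec (n : ℕ) : Jg (n + 2) = (n + 1) * Jg n := by
  have hint : Integrable (fun x : ℝ =>
      x ^ (n+2) * Real.exp (-(x ^ 2 / 2)) - (n+1) * (x ^ n * Real.exp (-(x ^ 2 / 2)))) :=
    (integrable_pow_gauss (n+2)).sub ((integrable_pow_gauss n).const_mul _)
  have hIoi : ∫ x in Set.Ioi (0:ℝ),
      (x ^ (n+2) * Real.exp (-(x ^ 2 / 2)) - (n+1) * (x ^ n * Real.exp (-(x ^ 2 / 2))))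
      = 0 - -((0:ℝ) ^ (n+1) * Real.exp (-((0:ℝ) ^ 2 / 2))) := by
    refine integral_Ioi_of_hasDerivAt_of_tendsto ?_ (fun x _ => F_hasDeriv n x) hint.integrableOn (F_tendsto_atTop n)
    exact (Continuous.continuousWithinAt (by continuity))
  have hIic : ∫ x in Set.Iic (0:ℝ),
      (x ^ (n+2) * Real.exp (-(x ^ 2 / 2)) - (n+1) * (x ^ n * Real.exp (-(x ^ 2 / 2))))
      = -((0:ℝ) ^ (n+1) * Real.exp (-((0:ℝ) ^ 2 / 2))) - 0 := by
    refine integral_Iic_of_hasDerivAt_of_tendsto ?_ (fun x _ => F_hasDeriv n x) hint.integrableOn (F_tendsto_atBot n)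
    exact (Continuous.continuousWithinAt (by continuity))
  have hsplit : (∫ x in Set.Iic (0:ℝ), (x ^ (n+2) * Real.exp (-(x ^ 2 / 2)) - (n+1) * (x ^ n * Real.exp (-(x ^ 2 / 2)))))
      + (∫ x in Set.Ioi (0:ℝ), (x ^ (n+2) * Real.exp (-(x ^ 2 / 2)) - (n+1) * (x ^ n * Real.exp (-(x ^ 2 / 2)))))
      = ∫ x : ℝ, (x ^ (n+2) * Real.exp (-(x ^ 2 / 2)) - (n+1) * (x ^ n * Real.exp (-(x ^ 2 / 2)))) := by
    have := integral_add_compl (measurableSet_Iic (a := (0:ℝ))) hint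
    rwa [Set.compl_Iic] at this
  have hzero : ∫ x : ℝ, (x ^ (n+2) * Real.exp (-(x ^ 2 / 2)) - (n+1) * (x ^ n * Real.exp (-(x ^ 2 / 2)))) = 0 := by
    rw [← hsplit, hIoi, hIic]; ring
  have := integral_sub (integrable_pow_gauss (n+2)) ((integrable_pow_gauss n).const_mul ((n:ℝ)+1))
  rw [hzero] at this
  have h3 : ∫ x : ℝ, ((n:ℝ)+1) * (x ^ n * Real.exp (-(x ^ 2 / 2))) = ((n:ℝ)+1) * ∫ x : ℝ, x ^ n * Real.exp (-(x ^ 2 / 2)) :=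
    integral_const_mul ((n:ℝ)+1) (fun x : ℝ => x ^ n * Real.exp (-(x ^ 2 / 2)))
  unfold Jg
  push_cast
  linarith [this.symm, h3]

lemma Jg_zero : Jg 0 = Real.sqrt (2 * π) := by
  unfold Jg
  have : (fun x : ℝ => x ^ 0 * Real.exp (-(x ^ 2 / 2))) = fun x : ℝ => Real.exp (-(2⁻¹:ℝ) * x ^ 2) := by
    funext x; ring_nf
  rw [this, integral_gaussian]
  rw [show π / 2⁻¹ = 2 * π by ring]

lemma Jg_one : Jg 1 = 0 := by
  have h := integral_neg_eq_self (μ := (volume : Measure ℝ)) (fun x : ℝ => x ^ 1 * Real.exp (-(x ^ 2 / 2)))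
  have h2 : ∫ x : ℝ, (-x) ^ 1 * Real.exp (-((-x) ^ 2 / 2)) = ∫ x : ℝ, -(x ^ 1 * Real.exp (-(x ^ 2 / 2))) := by
    congr 1; funext x; ring_nf
  unfold Jg
  have h3 : ∫ x : ℝ, -(x ^ 1 * Real.exp (-(x ^ 2 / 2))) = -∫ x : ℝ, x ^ 1 * Real.exp (-(x ^ 2 / 2)) :=
    integral_neg _
  rw [h2, h3] at h
  linarith

lemma sqrt_two_pi_pos : (0:ℝ) < Real.sqrt (2 * π) := Real.sqrt_pos.2 (by positivity)

noncomputable def mγ (n : ℕ) : ℝ := ∫ x : ℝ, x ^ n ∂(gaussianReal 0 1)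

lemma gaussianPDFReal_std (x : ℝ) :
    gaussianPDFReal 0 1 x = (Real.sqrt (2 * π))⁻¹ * Real.exp (-(x ^ 2 / 2)) := by
  rw [gaussianPDFReal_def]
  norm_num
  left; ring

lemma integral_gaussianReal_eq (g : ℝ → ℝ) :
    ∫ x, g x ∂(gaussianReal 0 1) = ∫ x : ℝ, gaussianPDFReal 0 1 x * g x := by
  rw [gaussianReal_of_var_ne_zero 0 one_ne_zero]
  rw [gaussianPDF_def]
  have : (fun x => ENNReal.ofReal (gaussianPDFReal 0 1 x))
      = fun x => ((gaussianPDFReal 0 1 x).toNNReal : ℝ≥0∞) := rfl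
  rw [this, integral_withDensity_eq_integral_smul (measurable_gaussianPDFReal 0 1).real_toNNReal]
  congr 1; funext x
  simp [NNReal.smul_def, Real.coe_toNNReal _ (gaussianPDFReal_nonneg 0 1 x)]

lemma integrable_pow_gaussianReal (n : ℕ) :
    Integrable (fun x : ℝ => x ^ n) (gaussianReal 0 1) := by
  rw [gaussianReal_of_var_ne_zero 0 one_ne_zero, gaussianPDF_def]
  have : (fun x => ENNReal.ofReal (gaussianPDFReal 0 1 x))
      = fun x => ((gaussianPDFReal 0 1 x).toNNReal : ℝ≥0∞) := rfl
  rw [this, integrable_withDensity_iff_integrable_smul (measurable_gaussianPDFReal 0 1).real_toNNReal]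
  have : (fun x : ℝ => (gaussianPDFReal 0 1 x).toNNReal • (x ^ n : ℝ))
      = fun x : ℝ => (Real.sqrt (2 * π))⁻¹ * (x ^ n * Real.exp (-(x ^ 2 / 2))) := by
    funext x
    rw [NNReal.smul_def, smul_eq_mul, Real.coe_toNNReal _ (gaussianPDFReal_nonneg 0 1 x), gaussianPDFReal_std]
    ring
  rw [this]
  exact (integrable_pow_gauss n).const_mul _

lemma mγ_eq (n : ℕ) : mγ n = (Real.sqrt (2 * π))⁻¹ * Jg n := by
  unfold mγ Jg
  rw [integral_gaussianReal_eq]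
  rw [← integral_const_mul]
  congr 1; funext x
  rw [gaussianPDFReal_std]; ring

lemma mγ_two : mγ 2 = 1 := by
  rw [mγ_eq, show (2:ℕ) = 0 + 2 from rfl, Jg_rec, Jg_zero]
  field_simp
  norm_num
lemma mγ_four : mγ 4 = 3 := by
  rw [mγ_eq, show Jg 4 = Jg (2 + 2) from rfl, Jg_rec, show Jg 2 = Jg (0 + 2) from rfl, Jg_rec, Jg_zero]
  have := sqrt_two_pi_pos.ne'
  field_simp
  ring
lemma mγ_six : mγ 6 = 15 := by
  rw [mγ_eq, show Jg 6 = Jg (4 + 2) from rfl, Jg_rec, show Jg 4 = Jg (2 + 2) from rfl, Jg_rec,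
    show Jg 2 = Jg (0 + 2) from rfl, Jg_rec, Jg_zero]
  have := sqrt_two_pi_pos.ne'
  field_simp
  ring
lemma mγ_one : mγ 1 = 0 := by rw [mγ_eq, Jg_one]; ring
lemma mγ_zero : mγ 0 = 1 := by
  unfold mγ
  simp

variable {d : ℕ}

noncomputable def μpi (d : ℕ) : Measure (Fin d → ℝ) := Measure.pi fun _ => gaussianReal 0 1

instance : IsProbabilityMeasure (μpi d) := by unfold μpi; infer_instance

/-- exponent function for a 3-index monomial -/
def ex3 (i j k : Fin d) (a b c : ℕ) : Fin d → ℕ :=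
  fun l => (if l = i then a else 0) + ((if l = j then b else 0) + (if l = k then c else 0))

lemma prod_ex3 (i j k : Fin d) (a b c : ℕ) (u : Fin d → ℝ) :
    ∏ l, u l ^ ex3 i j k a b c l = u i ^ a * (u j ^ b * u k ^ c) := by
  simp only [ex3, pow_add, pow_ite, pow_zero]
  rw [Finset.prod_mul_distrib, Finset.prod_mul_distrib]
  simp [Finset.prod_ite_eq']

lemma monomial_eq (i j k : Fin d) (a b c : ℕ) :
    (fun u : Fin d → ℝ => u i ^ a * (u j ^ b * u k ^ c))
      = fun u => ∏ l, (fun (l : Fin d) (x : ℝ) => x ^ ex3 i j k a b c l) l (u l) := by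
  funext u; rw [← prod_ex3]

lemma integrable_coord3 (i j k : Fin d) (a b c : ℕ) :
    Integrable (fun u : Fin d → ℝ => u i ^ a * (u j ^ b * u k ^ c)) (μpi d) := by
  rw [monomial_eq i j k a b c]
  letI : MeasureSpace ℝ := ⟨gaussianReal 0 1⟩
  haveI : SigmaFinite (volume : Measure ℝ) := inferInstanceAs (SigmaFinite (gaussianReal 0 1))
  exact Integrable.fintype_prod (f := fun (l : Fin d) (x : ℝ) => x ^ ex3 i j k a b c l)
    fun l => integrable_pow_gaussianReal _

lemma integral_coord3' (i j k : Fin d) (a b c : ℕ) :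
    ∫ u, u i ^ a * (u j ^ b * u k ^ c) ∂(μpi d) = ∏ l, mγ (ex3 i j k a b c l) := by
  rw [monomial_eq i j k a b c]
  letI : MeasureSpace ℝ := ⟨gaussianReal 0 1⟩
  haveI : SigmaFinite (volume : Measure ℝ) := inferInstanceAs (SigmaFinite (gaussianReal 0 1))
  exact integral_fintype_prod_eq_prod (fun (l : Fin d) (x : ℝ) => x ^ ex3 i j k a b c l)

lemma prod_m_ex3 (i j k : Fin d) (a b c : ℕ) (hij : i ≠ j) (hik : i ≠ k) (hjk : j ≠ k) :
    ∏ l, mγ (ex3 i j k a b c l) = mγ a * (mγ b * mγ c) := by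
  have : ∀ l, mγ (ex3 i j k a b c l)
      = (if l = i then mγ a else 1) * ((if l = j then mγ b else 1) * (if l = k then mγ c else 1)) := by
    intro l
    by_cases h1 : l = i <;> by_cases h2 : l = j <;> by_cases h3 : l = k <;>
      simp_all [ex3, mγ_zero]
  rw [Finset.prod_congr rfl (fun l _ => this l), Finset.prod_mul_distrib, Finset.prod_mul_distrib]
  simp [Finset.prod_ite_eq']

lemma integral_coord3 (i j k : Fin d) (a b c : ℕ) (hij : i ≠ j) (hik : i ≠ k) (hjk : j ≠ k) :
    ∫ u, u i ^ a * (u j ^ b * u k ^ c) ∂(μpi d) = mγ a * (mγ b * mγ c) := by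
  rw [integral_coord3', prod_m_ex3 _ _ _ _ _ _ hij hik hjk]

lemma integral_coord2 (i j : Fin d) (a b : ℕ) (hij : i ≠ j) :
    ∫ u, u i ^ a * u j ^ b ∂(μpi d) = mγ a * mγ b := by
  have h := integral_coord3' i j j a b 0
  have e1 : ∀ u : Fin d → ℝ, u i ^ a * (u j ^ b * u j ^ 0) = u i ^ a * u j ^ b := by
    intro u; simp
  rw [integral_congr_ae (Filter.Eventually.of_forall e1)] at h
  rw [h]
  have : ∀ l, mγ (ex3 i j j a b 0 l) = (if l = i then mγ a else 1) * (if l = j then mγ b else 1) := by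
    intro l
    by_cases h1 : l = i <;> by_cases h2 : l = j <;> simp_all [ex3, mγ_zero]
  rw [Finset.prod_congr rfl (fun l _ => this l), Finset.prod_mul_distrib]
  simp [Finset.prod_ite_eq']

lemma integral_coord1 (i : Fin d) (a : ℕ) :
    ∫ u, u i ^ a ∂(μpi d) = mγ a := by
  have h := integral_coord3' i i i a 0 0
  have e1 : ∀ u : Fin d → ℝ, u i ^ a * (u i ^ 0 * u i ^ 0) = u i ^ a := by intro u; simp
  rw [integral_congr_ae (Filter.Eventually.of_forall e1)] at h
  rw [h]
  have : ∀ l, mγ (ex3 i i i a 0 0 l) = (if l = i then mγ a else 1) := by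
    intro l; by_cases h1 : l = i <;> simp_all [ex3, mγ_zero]
  rw [Finset.prod_congr rfl (fun l _ => this l)]
  simp [Finset.prod_ite_eq']


lemma expandA (u : Fin d → ℝ) :
    (∑ i, u i ^ 2) ^ 3 = ∑ i, ∑ j, ∑ k, u i ^ 2 * (u j ^ 2 * u k ^ 2) := by
  simp only [pow_succ, pow_zero, one_mul, Finset.sum_mul, Finset.mul_sum]
  refine Finset.sum_congr rfl fun i _ => Finset.sum_congr rfl fun j _ =>
    Finset.sum_congr rfl fun k _ => by ring

lemma expandB (g : Fin d → ℝ) (u : Fin d → ℝ) :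
    (∑ i, g i * u i) ^ 2 * (∑ k, u k ^ 2)
      = ∑ i, ∑ j, ∑ k, (g k * g j) * (u k ^ 1 * (u j ^ 1 * u i ^ 2)) := by
  simp only [pow_succ, pow_zero, one_mul, Finset.sum_mul, Finset.mul_sum]
  refine Finset.sum_congr rfl fun i _ => Finset.sum_congr rfl fun j _ =>
    Finset.sum_congr rfl fun k _ => by ring

lemma integrable_A : Integrable (fun u : Fin d → ℝ => (∑ i, u i ^ 2) ^ 3) (μpi d) := by
  have : (fun u : Fin d → ℝ => (∑ i, u i ^ 2) ^ 3)
      = fun u => ∑ i, ∑ j, ∑ k, u i ^ 2 * (u j ^ 2 * u k ^ 2) := by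
    funext u; exact expandA u
  rw [this]
  refine integrable_finset_sum _ fun i _ => ?_
  refine integrable_finset_sum _ fun j _ => ?_
  exact integrable_finset_sum _ fun k _ => integrable_coord3 i j k 2 2 2

lemma integrable_B (g : Fin d → ℝ) :
    Integrable (fun u : Fin d → ℝ => (∑ i, g i * u i) ^ 2 * (∑ k, u k ^ 2)) (μpi d) := by
  have : (fun u : Fin d → ℝ => (∑ i, g i * u i) ^ 2 * (∑ k, u k ^ 2))
      = fun u => ∑ i, ∑ j, ∑ k, (g k * g j) * (u k ^ 1 * (u j ^ 1 * u i ^ 2)) := by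
    funext u; exact expandB g u
  rw [this]
  refine integrable_finset_sum _ fun i _ => ?_
  refine integrable_finset_sum _ fun j _ => ?_
  exact integrable_finset_sum _ fun k _ => (integrable_coord3 k j i 1 1 2).const_mul _

lemma T_val (i j k : Fin d) :
    ∫ u, u i ^ 2 * (u j ^ 2 * u k ^ 2) ∂(μpi d)
      = 1 + 2 * ((if i = j then (1:ℝ) else 0) + (if i = k then (1:ℝ) else 0)
          + (if j = k then (1:ℝ) else 0))
        + 8 * (if i = j then (1:ℝ) else 0) * (if i = k then (1:ℝ) else 0) := by
  by_cases h1 : i = j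
  · by_cases h2 : i = k
    · have hjk : j = k := h1 ▸ h2
      subst h1; subst h2
      have e : (fun u : Fin d → ℝ => u i ^ 2 * (u i ^ 2 * u i ^ 2)) = fun u => u i ^ 6 := by
        funext u; ring
      rw [show (∫ u, u i ^ 2 * (u i ^ 2 * u i ^ 2) ∂(μpi d)) = ∫ u, u i ^ 6 ∂(μpi d) from by rw [e],
        integral_coord1, mγ_six]
      norm_num
    · have hjk : ¬ j = k := fun h => h2 (h1 ▸ h)
      subst h1
      have e : (fun u : Fin d → ℝ => u i ^ 2 * (u i ^ 2 * u k ^ 2)) = fun u => u i ^ 4 * u k ^ 2 := by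
        funext u; ring
      rw [show (∫ u, u i ^ 2 * (u i ^ 2 * u k ^ 2) ∂(μpi d)) = ∫ u, u i ^ 4 * u k ^ 2 ∂(μpi d) from by rw [e],
        integral_coord2 i k 4 2 h2, mγ_four, mγ_two]
      norm_num [h2, hjk]
  · by_cases h2 : i = k
    · subst h2
      have hjk : ¬ j = i := fun h => h1 h.symm
      have e : (fun u : Fin d → ℝ => u i ^ 2 * (u j ^ 2 * u i ^ 2)) = fun u => u i ^ 4 * u j ^ 2 := by
        funext u; ring
      rw [show (∫ u, u i ^ 2 * (u j ^ 2 * u i ^ 2) ∂(μpi d)) = ∫ u, u i ^ 4 * u j ^ 2 ∂(μpi d) from by rw [e],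
        integral_coord2 i j 4 2 h1, mγ_four, mγ_two]
      norm_num [h1, hjk]
    · by_cases h3 : j = k
      · subst h3
        have e : (fun u : Fin d → ℝ => u i ^ 2 * (u j ^ 2 * u j ^ 2)) = fun u => u i ^ 2 * u j ^ 4 := by
          funext u; ring
        rw [show (∫ u, u i ^ 2 * (u j ^ 2 * u j ^ 2) ∂(μpi d)) = ∫ u, u i ^ 2 * u j ^ 4 ∂(μpi d) from by rw [e],
          integral_coord2 i j 2 4 h1, mγ_four, mγ_two]
        norm_num [h1, h2]
      · rw [integral_coord3 i j k 2 2 2 h1 h2 h3, mγ_two]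
        simp [h1, h2, h3]

lemma S_val (i j k : Fin d) :
    ∫ u, u i ^ 1 * (u j ^ 1 * u k ^ 2) ∂(μpi d)
      = (if i = j then (1:ℝ) else 0) * (1 + 2 * (if i = k then (1:ℝ) else 0)) := by
  by_cases h1 : i = j
  · subst h1
    by_cases h2 : i = k
    · subst h2
      have e : (fun u : Fin d → ℝ => u i ^ 1 * (u i ^ 1 * u i ^ 2)) = fun u => u i ^ 4 := by
        funext u; ring
      rw [show (∫ u, u i ^ 1 * (u i ^ 1 * u i ^ 2) ∂(μpi d)) = ∫ u, u i ^ 4 ∂(μpi d) from by rw [e],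
        integral_coord1, mγ_four]
      norm_num
    · have e : (fun u : Fin d → ℝ => u i ^ 1 * (u i ^ 1 * u k ^ 2)) = fun u => u i ^ 2 * u k ^ 2 := by
        funext u; ring
      rw [show (∫ u, u i ^ 1 * (u i ^ 1 * u k ^ 2) ∂(μpi d)) = ∫ u, u i ^ 2 * u k ^ 2 ∂(μpi d) from by rw [e],
        integral_coord2 i k 2 2 h2, mγ_two]
      simp [h2]
  · by_cases h2 : k = i
    · subst h2
      have e : (fun u : Fin d → ℝ => u k ^ 1 * (u j ^ 1 * u k ^ 2)) = fun u => u k ^ 3 * u j ^ 1 := by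
        funext u; ring
      rw [show (∫ u, u k ^ 1 * (u j ^ 1 * u k ^ 2) ∂(μpi d)) = ∫ u, u k ^ 3 * u j ^ 1 ∂(μpi d) from by rw [e],
        integral_coord2 k j 3 1 h1, mγ_one]
      simp [h1]
    · by_cases h3 : k = j
      · subst h3
        have e : (fun u : Fin d → ℝ => u i ^ 1 * (u k ^ 1 * u k ^ 2)) = fun u => u i ^ 1 * u k ^ 3 := by
          funext u; ring
        rw [show (∫ u, u i ^ 1 * (u k ^ 1 * u k ^ 2) ∂(μpi d)) = ∫ u, u i ^ 1 * u k ^ 3 ∂(μpi d) from by rw [e],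
          integral_coord2 i k 1 3 (fun h => h1 h), mγ_one]
        simp [h1]
      · rw [integral_coord3 i j k 1 1 2 h1 (fun h => h2 h.symm) (fun h => h3 h.symm), mγ_one]
        simp [h1]

lemma sumk (i j : Fin d) :
    ∑ k : Fin d, (1 + 2 * ((if i = j then (1:ℝ) else 0) + (if i = k then (1:ℝ) else 0)
          + (if j = k then (1:ℝ) else 0))
        + 8 * (if i = j then (1:ℝ) else 0) * (if i = k then (1:ℝ) else 0))
      = d * (1 + 2 * (if i = j then (1:ℝ) else 0)) + 4 + 8 * (if i = j then (1:ℝ) else 0) := by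
  rw [Finset.sum_congr rfl (fun k _ => show _ = (1 + 2 * (if i = j then (1:ℝ) else 0))
      + ((2:ℝ) * (if i = k then (1:ℝ) else 0) + 2 * (if j = k then (1:ℝ) else 0)
        + 8 * (if i = j then (1:ℝ) else 0) * (if i = k then (1:ℝ) else 0)) from by ring)]
  rw [Finset.sum_add_distrib, Finset.sum_const, Finset.card_univ]
  simp [Finset.sum_add_distrib, ← Finset.mul_sum, Finset.sum_ite_eq, mul_assoc]
  split_ifs <;> ring

lemma sumj (i : Fin d) :
    ∑ j : Fin d, ((d:ℝ) * (1 + 2 * (if i = j then (1:ℝ) else 0)) + 4 + 8 * (if i = j then (1:ℝ) else 0))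
      = d * (d + 2) + 4 * d + 8 := by
  rw [Finset.sum_congr rfl (fun j _ => show _ = ((d:ℝ) + 4)
      + (((2:ℝ) * d + 8) * (if i = j then (1:ℝ) else 0)) from by ring)]
  rw [Finset.sum_add_distrib, Finset.sum_const, Finset.card_univ, ← Finset.mul_sum]
  simp [Finset.sum_ite_eq]
  ring


lemma integral_A : ∫ u, (∑ i, u i ^ 2) ^ 3 ∂(μpi d)
    = (d:ℝ) ^ 3 + 6 * (d:ℝ) ^ 2 + 8 * d := by
  have : (fun u : Fin d → ℝ => (∑ i, u i ^ 2) ^ 3)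
      = fun u => ∑ i, ∑ j, ∑ k, u i ^ 2 * (u j ^ 2 * u k ^ 2) := by
    funext u; exact expandA u
  rw [this]
  rw [integral_finset_sum _ fun i _ => (integrable_finset_sum _ fun j _ =>
    integrable_finset_sum _ fun k _ => integrable_coord3 i j k 2 2 2)]
  have step : ∀ i : Fin d, (∫ u, ∑ j, ∑ k, u i ^ 2 * (u j ^ 2 * u k ^ 2) ∂(μpi d))
      = ∑ j, ∑ k : Fin d, (1 + 2 * ((if i = j then (1:ℝ) else 0) + (if i = k then (1:ℝ) else 0)
          + (if j = k then (1:ℝ) else 0))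
        + 8 * (if i = j then (1:ℝ) else 0) * (if i = k then (1:ℝ) else 0)) := by
    intro i
    rw [integral_finset_sum _ fun j _ =>
      integrable_finset_sum _ fun k _ => integrable_coord3 i j k 2 2 2]
    refine Finset.sum_congr rfl fun j _ => ?_
    rw [integral_finset_sum _ fun k _ => integrable_coord3 i j k 2 2 2]
    exact Finset.sum_congr rfl fun k _ => T_val i j k
  rw [Finset.sum_congr rfl fun i _ => step i]
  rw [Finset.sum_congr rfl fun i _ => Finset.sum_congr rfl fun j _ => sumk i j]
  rw [Finset.sum_congr rfl fun i _ => sumj i]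
  rw [Finset.sum_const, Finset.card_univ]
  simp only [Fintype.card_fin, nsmul_eq_mul]
  ring


lemma integral_B (g : Fin d → ℝ) :
    ∫ u, (∑ i, g i * u i) ^ 2 * (∑ k, u k ^ 2) ∂(μpi d)
      = ((d:ℝ) + 2) * ∑ i, g i ^ 2 := by
  have hfe : (fun u : Fin d → ℝ => (∑ i, g i * u i) ^ 2 * (∑ k, u k ^ 2))
      = fun u => ∑ i, ∑ j, ∑ k, (g k * g j) * (u k ^ 1 * (u j ^ 1 * u i ^ 2)) := by
    funext u; exact expandB g u
  rw [hfe]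
  rw [integral_finset_sum _ fun i _ => (integrable_finset_sum _ fun j _ =>
    integrable_finset_sum _ fun k _ => (integrable_coord3 k j i 1 1 2).const_mul _)]
  have step : ∀ i : Fin d, (∫ u, ∑ j, ∑ k, (g k * g j) * (u k ^ 1 * (u j ^ 1 * u i ^ 2)) ∂(μpi d))
      = ∑ j, ∑ k : Fin d, (g k * g j) *
          ((if k = j then (1:ℝ) else 0) * (1 + 2 * (if k = i then (1:ℝ) else 0))) := by
    intro i
    rw [integral_finset_sum _ fun j _ =>
      integrable_finset_sum _ fun k _ => (integrable_coord3 k j i 1 1 2).const_mul _]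
    refine Finset.sum_congr rfl fun j _ => ?_
    rw [integral_finset_sum _ fun k _ => (integrable_coord3 k j i 1 1 2).const_mul _]
    refine Finset.sum_congr rfl fun k _ => ?_
    rw [integral_const_mul, S_val k j i]
  rw [Finset.sum_congr rfl fun i _ => step i]
  have stepj : ∀ i : Fin d, (∑ j, ∑ k : Fin d, (g k * g j) *
      ((if k = j then (1:ℝ) else 0) * (1 + 2 * (if k = i then (1:ℝ) else 0))))
      = ∑ j : Fin d, g j ^ 2 * (1 + 2 * (if j = i then (1:ℝ) else 0)) := by
    intro i
    refine Finset.sum_congr rfl fun j _ => ?_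
    rw [Finset.sum_eq_single j]
    · simp only [if_pos rfl, if_true, sq]; ring_nf
    · intro k _ hkj; simp [hkj]
    · intro h; exact absurd (Finset.mem_univ j) h
  rw [Finset.sum_congr rfl fun i _ => stepj i]
  rw [Finset.sum_comm]
  have stepi : ∀ j : Fin d, (∑ i : Fin d, g j ^ 2 * (1 + 2 * (if j = i then (1:ℝ) else 0)))
      = g j ^ 2 * d + 2 * g j ^ 2 := by
    intro j
    rw [Finset.sum_congr rfl (fun i _ => show _ = g j ^ 2
        + (2 * g j ^ 2) * (if j = i then (1:ℝ) else 0) from by ring)]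
    rw [Finset.sum_add_distrib, Finset.sum_const, Finset.card_univ, ← Finset.mul_sum]
    simp [Finset.sum_ite_eq]
    ring
  rw [Finset.sum_congr rfl fun j _ => stepi j]
  rw [Finset.sum_add_distrib, ← Finset.sum_mul, ← Finset.mul_sum]
  ring


end AuxGaussian

section Taylor
open MeasureTheory Real
variable {F : Type*} [NormedAddCommGroup F] [InnerProductSpace ℝ F] [CompleteSpace F]

local notation "⟪" x ", " y "⟫" => @inner ℝ _ _ x y

lemma fderiv_eq_inner_gradient (f : F → ℝ) (z w : F) :
    fderiv ℝ f z w = ⟪gradient f z, w⟫ := by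
  rw [gradient]
  conv_lhs => rw [← (InnerProductSpace.toDual ℝ F).apply_symm_apply (fderiv ℝ f z)]
  simp [InnerProductSpace.toDual_apply_apply]

lemma taylor_bound_of_lipschitz_gradient (f : F → ℝ) (hf : Differentiable ℝ f)
    (L : ℝ) (hL : 0 ≤ L)
    (hLip : ∀ x y, ‖gradient f x - gradient f y‖ ≤ L * ‖x - y‖) (x v : F) :
    |f (x + v) - f x - ⟪gradient f x, v⟫| ≤ L / 2 * ‖v‖ ^ 2 := by
  have hgradcont : Continuous (gradient f) := by
    have : LipschitzWith (Real.toNNReal L) (gradient f) := by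
      refine LipschitzWith.of_dist_le_mul fun a b => ?_
      rw [dist_eq_norm, dist_eq_norm, Real.coe_toNNReal _ hL]
      exact hLip a b
    exact this.continuous
  have hφ : ∀ t : ℝ, HasDerivAt (fun t : ℝ => f (x + t • v))
      ⟪gradient f (x + t • v), v⟫ t := by
    intro t
    have h1 : HasDerivAt (fun t : ℝ => x + t • v) v t := by
      simpa using ((hasDerivAt_id t).smul_const v).const_add x
    have h2 := (hf (x + t • v)).hasFDerivAt.comp_hasDerivAt t h1
    rwa [fderiv_eq_inner_gradient] at h2
  have hcont : Continuous (fun t : ℝ => ⟪gradient f (x + t • v), v⟫) := by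
    apply Continuous.inner
    · exact hgradcont.comp (by continuity)
    · exact continuous_const
  have hFTC : f (x + v) - f x = ∫ t in (0:ℝ)..1, ⟪gradient f (x + t • v), v⟫ := by
    have := intervalIntegral.integral_eq_sub_of_hasDerivAt
      (f := fun t : ℝ => f (x + t • v)) (fun t _ => hφ t)
      (hcont.intervalIntegrable 0 1)
    rw [this]
    norm_num
  have hsplit : f (x + v) - f x - ⟪gradient f x, v⟫
      = ∫ t in (0:ℝ)..1, (⟪gradient f (x + t • v), v⟫ - ⟪gradient f x, v⟫) := by
    rw [intervalIntegral.integral_sub (hcont.intervalIntegrable 0 1)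
      (intervalIntegrable_const), intervalIntegral.integral_const, ← hFTC]
    norm_num
  have hbound : ∀ t ∈ Set.uIoc (0:ℝ) 1,
      ‖⟪gradient f (x + t • v), v⟫ - ⟪gradient f x, v⟫‖ ≤ L * ‖v‖ ^ 2 * t := by
    intro t ht
    rw [Set.uIoc_of_le zero_le_one] at ht
    have h0t : 0 < t := ht.1
    have ht1 : t ≤ 1 := ht.2
    rw [← inner_sub_left]
    calc ‖⟪gradient f (x + t • v) - gradient f x, v⟫‖
        ≤ ‖gradient f (x + t • v) - gradient f x‖ * ‖v‖ := norm_inner_le_norm _ _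
      _ ≤ (L * ‖(x + t • v) - x‖) * ‖v‖ := by
          exact mul_le_mul_of_nonneg_right (hLip _ _) (norm_nonneg v)
      _ = L * ‖v‖ ^ 2 * t := by
          rw [add_sub_cancel_left, norm_smul, Real.norm_eq_abs, abs_of_pos h0t]
          ring
  have hIb : ‖∫ t in (0:ℝ)..1, (⟪gradient f (x + t • v), v⟫ - ⟪gradient f x, v⟫)‖
      ≤ L / 2 * ‖v‖ ^ 2 := by
    have hInt : IntervalIntegrable (fun t : ℝ => L * ‖v‖ ^ 2 * t) volume 0 1 :=
      (Continuous.intervalIntegrable (by continuity) 0 1)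
    have hb := intervalIntegral.norm_integral_le_abs_of_norm_le
      (f := fun t : ℝ => ⟪gradient f (x + t • v), v⟫ - ⟪gradient f x, v⟫)
      ((ae_restrict_iff' measurableSet_uIoc).2 (Filter.Eventually.of_forall hbound)) hInt
    refine le_trans hb ?_
    rw [intervalIntegral.integral_const_mul, integral_id,
      abs_of_nonneg (by positivity : (0:ℝ) ≤ L * ‖v‖ ^ 2 * ((1 ^ 2 - 0 ^ 2) / 2))]
    exact le_of_eq (by ring)
  rw [hsplit, ← Real.norm_eq_abs]
  exact hIb

end Taylor

section Main
open MeasureTheory ProbabilityTheory Real Filter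

-- basic coordinate lemmas
lemma esymm_apply (w : Fin d → ℝ) (i : Fin d) :
    (MeasurableEquiv.toLp 2 (Fin d → ℝ)) w i = w i := by
  rfl

lemma norm_esymm_sq (w : Fin d → ℝ) :
    ‖(MeasurableEquiv.toLp 2 (Fin d → ℝ)) w‖ ^ 2 = ∑ i, w i ^ 2 := by
  rw [EuclideanSpace.norm_eq, Real.sq_sqrt (by positivity)]
  refine Finset.sum_congr rfl fun i _ => ?_
  rw [esymm_apply, Real.norm_eq_abs, sq_abs]

lemma inner_esymm (g : EuclideanSpace ℝ (Fin d)) (w : Fin d → ℝ) :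
    @inner ℝ _ _ g ((MeasurableEquiv.toLp 2 (Fin d → ℝ)) w) = ∑ i, g i * w i := by
  rw [PiLp.inner_apply]
  refine Finset.sum_congr rfl fun i _ => ?_
  rw [esymm_apply]
  simp [RCLike.inner_apply, mul_comm]


/-- If `f : ℝ^d → ℝ` is differentiable with `L`-Lipschitz gradient and
`ν > 0`, then for every `x`,
`(1/ν²) E_u[(f(x+νu) − f(x))² ‖u‖²] ≤ (ν²/2) L² (d+6)³ + 2(d+4) ‖∇f(x)‖²`. -/
theorem gaussian_difference_quotient_second_moment_le (d : ℕ) (L ν : ℝ) (hL : 0 < L)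
    (hν : 0 < ν) (f : EuclideanSpace ℝ (Fin d) → ℝ) (hf : Differentiable ℝ f)
    (hLip : ∀ x y, ‖gradient f x - gradient f y‖ ≤ L * ‖x - y‖)
    (x : EuclideanSpace ℝ (Fin d)) :
    1 / ν ^ 2 * ∫ u, (f (x + ν • u) - f x) ^ 2 * ‖u‖ ^ 2 ∂(stdGaussian d)
      ≤ ν ^ 2 / 2 * L ^ 2 * ((d : ℝ) + 6) ^ 3 + 2 * ((d : ℝ) + 4) * ‖gradient f x‖ ^ 2 := by
  set g := gradient f x with hg
  -- the bound function on EuclideanSpace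
  set B : EuclideanSpace ℝ (Fin d) → ℝ := fun u =>
    (L ^ 2 * ν ^ 4 / 2) * (‖u‖ ^ 2) ^ 3 + (2 * ν ^ 2) * ((@inner ℝ _ _ g u) ^ 2 * ‖u‖ ^ 2)
    with hB
  -- pointwise bound
  have hpoint : ∀ u : EuclideanSpace ℝ (Fin d),
      (f (x + ν • u) - f x) ^ 2 * ‖u‖ ^ 2 ≤ B u := by
    intro u
    have htay := taylor_bound_of_lipschitz_gradient f hf L hL.le hLip x (ν • u)
    have hin : @inner ℝ _ _ g (ν • u) = ν * @inner ℝ _ _ g u := real_inner_smul_right g u ν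
    have hnv : ‖ν • u‖ ^ 2 = ν ^ 2 * ‖u‖ ^ 2 := by
      rw [norm_smul, mul_pow, Real.norm_eq_abs, sq_abs]
    rw [hin, hnv] at htay
    set A := f (x + ν • u) - f x with hA
    set C := ν * @inner ℝ _ _ g u with hC
    clear_value A C
    have hR2 : (A - C) ^ 2 ≤ (L / 2 * (ν ^ 2 * ‖u‖ ^ 2)) ^ 2 := by
      rw [← sq_abs]
      exact pow_le_pow_left₀ (abs_nonneg _) htay 2
    have hA2 : A ^ 2 ≤ 2 * (A - C) ^ 2 + 2 * C ^ 2 := by nlinarith [sq_nonneg (A - 2 * C)]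
    have hu2 : (0:ℝ) ≤ ‖u‖ ^ 2 := by positivity
    rw [hB]
    have h2c : 2 * (L / 2 * (ν ^ 2 * ‖u‖ ^ 2)) ^ 2 = L ^ 2 * ν ^ 4 / 2 * (‖u‖ ^ 2) ^ 2 := by ring
    have : A ^ 2 ≤ L ^ 2 * ν ^ 4 / 2 * (‖u‖ ^ 2) ^ 2 + 2 * C ^ 2 := by linarith
    calc A ^ 2 * ‖u‖ ^ 2 ≤ (L ^ 2 * ν ^ 4 / 2 * (‖u‖ ^ 2) ^ 2 + 2 * C ^ 2) * ‖u‖ ^ 2 :=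
          mul_le_mul_of_nonneg_right this hu2
      _ = (L ^ 2 * ν ^ 4 / 2) * (‖u‖ ^ 2) ^ 3 + (2 * ν ^ 2) * ((@inner ℝ _ _ g u) ^ 2 * ‖u‖ ^ 2) := by
          rw [hC]; ring
  -- integrability of B over stdGaussian
  have hBcomp : (fun w : Fin d → ℝ => B ((MeasurableEquiv.toLp 2 (Fin d → ℝ)) w))
      = fun w => (L ^ 2 * ν ^ 4 / 2) * ((∑ i, w i ^ 2) ^ 3)
          + (2 * ν ^ 2) * ((∑ i, g i * w i) ^ 2 * (∑ k, w k ^ 2)) := by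
    funext w
    rw [hB]
    simp only [norm_esymm_sq, inner_esymm]
  have hsg : stdGaussian d = (μpi d).map (MeasurableEquiv.toLp 2 (Fin d → ℝ)) := rfl
  have hBint : Integrable B (stdGaussian d) := by
    rw [hsg, integrable_map_equiv]
    have : (B ∘ (MeasurableEquiv.toLp 2 (Fin d → ℝ))) = fun w => (L ^ 2 * ν ^ 4 / 2) * ((∑ i, w i ^ 2) ^ 3)
          + (2 * ν ^ 2) * ((∑ i, g i * w i) ^ 2 * (∑ k, w k ^ 2)) := hBcomp
    rw [this]
    exact ((integrable_A (d := d)).const_mul _).add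
      ((integrable_B (fun i => g i)).const_mul _)
  -- value of ∫ B
  have hBval : ∫ u, B u ∂(stdGaussian d)
      = (L ^ 2 * ν ^ 4 / 2) * ((d:ℝ) ^ 3 + 6 * (d:ℝ) ^ 2 + 8 * d)
        + (2 * ν ^ 2) * (((d:ℝ) + 2) * ∑ i, g i ^ 2) := by
    rw [hsg, integral_map_equiv]
    have : (fun w => B ((MeasurableEquiv.toLp 2 (Fin d → ℝ)) w)) = fun w => (L ^ 2 * ν ^ 4 / 2) * ((∑ i, w i ^ 2) ^ 3)
          + (2 * ν ^ 2) * ((∑ i, g i * w i) ^ 2 * (∑ k, w k ^ 2)) := hBcomp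
    rw [show (∫ w, B ((MeasurableEquiv.toLp 2 (Fin d → ℝ)) w) ∂(μpi d)) = ∫ w, ((L ^ 2 * ν ^ 4 / 2) * ((∑ i, w i ^ 2) ^ 3)
          + (2 * ν ^ 2) * ((∑ i, g i * w i) ^ 2 * (∑ k, w k ^ 2))) ∂(μpi d) from by rw [← this]]
    rw [integral_add ((integrable_A (d := d)).const_mul _) ((integrable_B _).const_mul _),
      integral_const_mul, integral_const_mul, integral_A, integral_B]
  -- ∫ h ≤ ∫ B
  have hmono : (∫ u, (f (x + ν • u) - f x) ^ 2 * ‖u‖ ^ 2 ∂(stdGaussian d))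
      ≤ ∫ u, B u ∂(stdGaussian d) := by
    refine integral_mono_of_nonneg ?_ hBint ?_
    · exact Filter.Eventually.of_forall fun u => by positivity
    · exact Filter.Eventually.of_forall hpoint
  -- norm of gradient
  have hgnorm : ‖g‖ ^ 2 = ∑ i, g i ^ 2 := by
    rw [EuclideanSpace.norm_eq, Real.sq_sqrt (by positivity)]
    exact Finset.sum_congr rfl fun i _ => by rw [Real.norm_eq_abs, sq_abs]
  -- final arithmetic
  have hν2 : (0:ℝ) < ν ^ 2 := by positivity
  have h1 : 1 / ν ^ 2 * ∫ u, (f (x + ν • u) - f x) ^ 2 * ‖u‖ ^ 2 ∂(stdGaussian d)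
      ≤ 1 / ν ^ 2 * ((L ^ 2 * ν ^ 4 / 2) * ((d:ℝ) ^ 3 + 6 * (d:ℝ) ^ 2 + 8 * d)
        + (2 * ν ^ 2) * (((d:ℝ) + 2) * ∑ i, g i ^ 2)) := by
    rw [← hBval]
    exact mul_le_mul_of_nonneg_left hmono (by positivity)
  refine le_trans h1 ?_
  rw [← hgnorm]
  have hd0 : (0:ℝ) ≤ (d:ℝ) := Nat.cast_nonneg d
  have hG : (0:ℝ) ≤ ‖g‖ ^ 2 := by positivity
  have hexp : 1 / ν ^ 2 * ((L ^ 2 * ν ^ 4 / 2) * ((d:ℝ) ^ 3 + 6 * (d:ℝ) ^ 2 + 8 * d)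
        + (2 * ν ^ 2) * (((d:ℝ) + 2) * ‖g‖ ^ 2))
      = (ν ^ 2 * L ^ 2 / 2) * ((d:ℝ) ^ 3 + 6 * (d:ℝ) ^ 2 + 8 * d)
        + 2 * (((d:ℝ) + 2) * ‖g‖ ^ 2) := by
    field_simp
  rw [hexp]
  have hLν : (0:ℝ) ≤ ν ^ 2 * L ^ 2 / 2 := by positivity
  nlinarith [mul_nonneg hLν (show (0:ℝ) ≤ 12 * (d:ℝ) ^ 2 + 100 * (d:ℝ) + 216 by positivity),
    mul_nonneg hG hd0]


end Main
end

section
/- Let n ≥ 1, η > 0, ℓ > 0, L > 0 with ℓ ≤ L. Let f^1, …, f^n : ℝ^d → ℝ be differentiable, each ℓ-strongly convex (i.e. ⟨x − y, ∇f^i(x) − ∇f^i(y)⟩ ≥ ℓ‖x − y‖², equivalently f^i(x) ≥ f^i(y) + ⟨∇f^i(y), x − y⟩ + (ℓ/2)‖x − y‖²) and with L-Lipschitz gradient, and set f = (1/n)∑_i f^i, with x* the minimizer of f. Then for any points x_1, …, x_n ∈ ℝ^d with mean μ = (1/n)∑_i x_i and Γ = (1/n)∑_i ‖x_i − μ‖²,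 one has ‖μ − x* − (2η/n²)∑_{i=1}^n ∇f^i(x_i)‖² ≤ (1 − ℓη/n)‖μ − x*‖² − (4η/n − 16Lη²/n²)(f(μ) − f(x*)) + (2(L+ℓ)η/n + 8L²η²/n²) Γ. -/
open Finset RealInnerProductSpace intervalIntegral


open Finset RealInnerProductSpace intervalIntegral

variable {F : Type*} [NormedAddCommGroup F] [InnerProductSpace ℝ F] [CompleteSpace F]
set_option linter.unusedSectionVars false

lemma descent_lemma (g : F → ℝ) (hg : Differentiable ℝ g) (L : ℝ) (hL : 0 ≤ L)
    (hLip : ∀ x y, ‖gradient g x - gradient g y‖ ≤ L * ‖x - y‖) (x y : F) :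
    g y ≤ g x + ⟪gradient g x, y - x⟫ + L / 2 * ‖y - x‖ ^ 2 := by
  set v := y - x with hv
  have hγ : ∀ t : ℝ, HasDerivAt (fun t : ℝ => g (x + t • v)) ⟪gradient g (x + t • v), v⟫ t := by
    intro t
    have h1 : HasDerivAt (fun t : ℝ => x + t • v) v t := by
      simpa using ((hasDerivAt_id t).smul_const v).const_add x
    have h2 := (hg (x + t • v)).hasGradientAt.hasFDerivAt
    exact h2.comp_hasDerivAt t h1
  have hcont : Continuous fun t : ℝ => ⟪gradient g (x + t • v), v⟫ := by
    have hgl : Continuous (gradient g) :=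
      (LipschitzWith.of_dist_le_mul (K := ⟨L, hL⟩) (fun a b => by
          rw [dist_eq_norm, dist_eq_norm]; exact hLip a b)).continuous
    exact (hgl.comp (by continuity)).inner continuous_const
  have hFTC : (∫ t in (0:ℝ)..1, ⟪gradient g (x + t • v), v⟫) = g (x + (1:ℝ) • v) - g (x + (0:ℝ) • v) := by
    apply integral_eq_sub_of_hasDerivAt (fun t _ => hγ t)
    exact hcont.intervalIntegrable 0 1
  have hbound : (∫ t in (0:ℝ)..1, ⟪gradient g (x + t • v), v⟫)
      ≤ ∫ t in (0:ℝ)..1, (⟪gradient g x, v⟫ + L * t * ‖v‖ ^ 2) := by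
    apply integral_mono_on (by norm_num) (hcont.intervalIntegrable 0 1)
      ((continuous_const.add (by continuity)).intervalIntegrable 0 1)
    intro t ht
    have h1 : ⟪gradient g (x + t • v) - gradient g x, v⟫ ≤ L * t * ‖v‖ ^ 2 := by
      calc ⟪gradient g (x + t • v) - gradient g x, v⟫ ≤ ‖gradient g (x + t • v) - gradient g x‖ * ‖v‖ :=
            real_inner_le_norm _ _
        _ ≤ (L * ‖x + t • v - x‖) * ‖v‖ := by
            have := hLip (x + t • v) x
            nlinarith [norm_nonneg v]
        _ = L * t * ‖v‖ ^ 2 := by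
            rw [show x + t • v - x = t • v by abel, norm_smul]
            simp [abs_of_nonneg ht.1]
            ring
    have := inner_sub_left (𝕜 := ℝ) (gradient g (x + t • v)) (gradient g x) v
    simp only [Pi.add_apply]; linarith [h1, this.symm.le, this.le]
  have hint : (∫ t in (0:ℝ)..1, (⟪gradient g x, v⟫ + L * t * ‖v‖ ^ 2))
      = ⟪gradient g x, v⟫ + L / 2 * ‖v‖ ^ 2 := by
    have hc : Continuous fun t : ℝ => L * t * ‖v‖ ^ 2 := by continuity
    rw [integral_add intervalIntegrable_const (hc.intervalIntegrable 0 1)]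
    rw [show (fun t : ℝ => L * t * ‖v‖ ^ 2) = fun t : ℝ => (L * ‖v‖ ^ 2) * t by ext t; ring,
      integral_const_mul, integral_id]
    simp
    ring
  have : g y - g x ≤ ⟪gradient g x, v⟫ + L / 2 * ‖v‖ ^ 2 := by
    rw [← hint]
    have := hFTC
    simp only [one_smul, zero_smul, add_zero] at this
    rw [show x + v = y by rw [hv]; abel] at this
    linarith [hbound]
  linarith

open Finset RealInnerProductSpace

variable {F : Type*} [NormedAddCommGroup F] [InnerProductSpace ℝ F] [CompleteSpace F]
set_option linter.unusedSectionVars false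

lemma hasGradientAt_avg {n : ℕ} (fi : Fin n → F → ℝ) (hfi : ∀ i, Differentiable ℝ (fi i))
    (c : ℝ) (x : F) :
    HasGradientAt (fun x => c * ∑ i, fi i x) (c • ∑ i, gradient (fi i) x) x := by
  have h1 : ∀ i : Fin n, HasFDerivAt (fi i)
      ((InnerProductSpace.toDual ℝ F) (gradient (fi i) x)) x :=
    fun i => ((hfi i) x).hasGradientAt.hasFDerivAt
  have h2 : HasFDerivAt (fun x => c * ∑ i, fi i x)
      (c • ∑ i : Fin n, (InnerProductSpace.toDual ℝ F) (gradient (fi i) x)) x := by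
    have := (HasFDerivAt.sum (u := Finset.univ) (fun i _ => h1 i)).const_mul c
    simpa [smul_eq_mul] using this
  have h3 : (c • ∑ i : Fin n, (InnerProductSpace.toDual ℝ F) (gradient (fi i) x))
      = (InnerProductSpace.toDual ℝ F) (c • ∑ i, gradient (fi i) x) := by
    rw [map_smul, map_sum]
  rw [h3] at h2
  simpa only [LinearIsometryEquiv.symm_apply_apply] using h2.hasGradientAt

lemma norm_sum_sq_le_card_mul (n : ℕ) (u : Fin n → F) :
    ‖∑ i, u i‖ ^ 2 ≤ n * ∑ i, ‖u i‖ ^ 2 := by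
  calc ‖∑ i, u i‖ ^ 2 ≤ (∑ i, ‖u i‖) ^ 2 := by
        have := norm_sum_le Finset.univ u
        nlinarith [norm_nonneg (∑ i, u i), Finset.sum_nonneg (fun i (_ : i ∈ Finset.univ) => norm_nonneg (u i))]
    _ ≤ (Finset.univ : Finset (Fin n)).card * ∑ i, ‖u i‖ ^ 2 := sq_sum_le_card_mul_sum_sq
    _ = n * ∑ i, ‖u i‖ ^ 2 := by simp


set_option maxHeartbeats 1000000 in
/-- One-step contraction of the distance of the average model to the
optimum under exact local gradients, in the strongly convex case:
`‖μ − x* − (2η/n²)∑_i ∇f^i(x_i)‖² ≤ (1 − ℓη/n)‖μ − x*‖²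
  − (4η/n − 16Lη²/n²)(f(μ) − f(x*)) + (2(L+ℓ)η/n + 8L²η²/n²) Γ`. -/
theorem hdo_mean_contraction (d n : ℕ) (hn : 1 ≤ n) (η ℓ L : ℝ)
    (hη : 0 < η) (hℓ : 0 < ℓ) (hL : 0 < L) (hℓL : ℓ ≤ L)
    (fi : Fin n → EuclideanSpace ℝ (Fin d) → ℝ)
    (hfi : ∀ i, Differentiable ℝ (fi i))
    (hsc : ∀ i x y, ℓ * ‖x - y‖ ^ 2 ≤ ⟪x - y, gradient (fi i) x - gradient (fi i) y⟫)
    (hsc' : ∀ i x y, fi i y + ⟪gradient (fi i) y, x - y⟫ + ℓ / 2 * ‖x - y‖ ^ 2 ≤ fi i x)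
    (hLipfi : ∀ i x y, ‖gradient (fi i) x - gradient (fi i) y‖ ≤ L * ‖x - y‖)
    (f : EuclideanSpace ℝ (Fin d) → ℝ) (hf : ∀ x, f x = (n : ℝ)⁻¹ * ∑ i, fi i x)
    (xstar : EuclideanSpace ℝ (Fin d)) (hmin : ∀ y, f xstar ≤ f y)
    (xs : Fin n → EuclideanSpace ℝ (Fin d)) :
    let μ : EuclideanSpace ℝ (Fin d) := (n : ℝ)⁻¹ • ∑ i, xs i
    let Γ : ℝ := (n : ℝ)⁻¹ * ∑ i, ‖xs i - μ‖ ^ 2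
    ‖μ - xstar - (2 * η / (n : ℝ) ^ 2) • ∑ i, gradient (fi i) (xs i)‖ ^ 2
      ≤ (1 - ℓ * η / (n : ℝ)) * ‖μ - xstar‖ ^ 2
        - (4 * η / (n : ℝ) - 16 * L * η ^ 2 / (n : ℝ) ^ 2) * (f μ - f xstar)
        + (2 * (L + ℓ) * η / (n : ℝ) + 8 * L ^ 2 * η ^ 2 / (n : ℝ) ^ 2) * Γ := by
  intro μ Γ
  have hN : (0 : ℝ) < n := by exact_mod_cast hn
  have hN' : (n : ℝ) ≠ 0 := hN.ne'
  set N : ℝ := (n : ℝ) with hNdef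
  set a : EuclideanSpace ℝ (Fin d) := μ - xstar with ha
  set S : EuclideanSpace ℝ (Fin d) := ∑ i, gradient (fi i) (xs i) with hS
  set Ssq : ℝ := ∑ i, ‖xs i - μ‖ ^ 2 with hSq
  set Fd : ℝ := f μ - f xstar with hFd
  set c : ℝ := 2 * η / N ^ 2 with hc
  have hcpos : 0 < c := by positivity
  -- gradient of f
  have hfeq : f = fun x => N⁻¹ * ∑ i, fi i x := funext hf
  have hgf : ∀ x : EuclideanSpace ℝ (Fin d), HasGradientAt f (N⁻¹ • ∑ i, gradient (fi i) x) x := by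
    rw [hfeq]; exact fun x => hasGradientAt_avg fi hfi N⁻¹ x
  have hgfeq : ∀ x : EuclideanSpace ℝ (Fin d), gradient f x = N⁻¹ • ∑ i, gradient (fi i) x :=
    fun x => (hgf x).gradient
  have hdf : Differentiable ℝ f := fun x => ((hgf x).differentiableAt)
  have hLipf : ∀ x y : EuclideanSpace ℝ (Fin d), ‖gradient f x - gradient f y‖ ≤ L * ‖x - y‖ := by
    intro x y
    rw [hgfeq, hgfeq, ← smul_sub, ← Finset.sum_sub_distrib, norm_smul]
    have h1 : ‖∑ i, (gradient (fi i) x - gradient (fi i) y)‖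
        ≤ ∑ i : Fin n, L * ‖x - y‖ := by
      refine (norm_sum_le _ _).trans (Finset.sum_le_sum fun i _ => hLipfi i x y)
    rw [Finset.sum_const, Finset.card_univ, Fintype.card_fin, nsmul_eq_mul] at h1
    have : ‖N⁻¹‖ = N⁻¹ := by
      rw [Real.norm_eq_abs, abs_of_pos (by positivity)]
    rw [this]
    calc N⁻¹ * ‖∑ i, (gradient (fi i) x - gradient (fi i) y)‖
        ≤ N⁻¹ * (N * (L * ‖x - y‖)) := by
          apply mul_le_mul_of_nonneg_left _ (by positivity)
          exact_mod_cast h1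
      _ = L * ‖x - y‖ := by field_simp
  -- descent lemma for each fi
  have hdesc : ∀ (i : Fin n) (x y : EuclideanSpace ℝ (Fin d)),
      fi i y ≤ fi i x + ⟪gradient (fi i) x, y - x⟫ + L / 2 * ‖y - x‖ ^ 2 :=
    fun i => descent_lemma (fi i) (hfi i) L hL.le (hLipfi i)
  -- ‖∇f μ‖² ≤ 2 L Fd
  have hgradmin : ‖gradient f μ‖ ^ 2 ≤ 2 * L * Fd := by
    have hd := descent_lemma f hdf L hL.le hLipf μ (μ - L⁻¹ • gradient f μ)
    have h1 : μ - L⁻¹ • gradient f μ - μ = -(L⁻¹ • gradient f μ) := by abel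
    rw [h1] at hd
    have h2 : ⟪gradient f μ, -(L⁻¹ • gradient f μ)⟫ = -(L⁻¹ * ‖gradient f μ‖ ^ 2) := by
      rw [inner_neg_right, real_inner_smul_right, real_inner_self_eq_norm_sq]
    have h3 : ‖-(L⁻¹ • gradient f μ)‖ ^ 2 = L⁻¹ ^ 2 * ‖gradient f μ‖ ^ 2 := by
      rw [norm_neg, norm_smul, mul_pow, Real.norm_eq_abs, sq_abs]
    rw [h2, h3] at hd
    have h4 := hmin (μ - L⁻¹ • gradient f μ)
    have hL' : L ≠ 0 := hL.ne'
    have hid : -(L⁻¹ * ‖gradient f μ‖ ^ 2) + L / 2 * (L⁻¹ ^ 2 * ‖gradient f μ‖ ^ 2)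
        = -(‖gradient f μ‖ ^ 2 / (2 * L)) := by field_simp; ring
    have h6 : ‖gradient f μ‖ ^ 2 / (2 * L) ≤ Fd := by rw [hFd]; linarith
    rw [div_le_iff₀ (by positivity)] at h6
    linarith
  -- (A) key lower bound on ⟪S, a⟫
  have hA : N * Fd + N * (ℓ / 4) * ‖a‖ ^ 2 - (L + ℓ) / 2 * Ssq ≤ ⟪S, a⟫ := by
    have hper : ∀ i : Fin n,
        fi i μ - fi i xstar + ℓ / 4 * ‖a‖ ^ 2 - (L + ℓ) / 2 * ‖xs i - μ‖ ^ 2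
          ≤ ⟪gradient (fi i) (xs i), a⟫ := by
      intro i
      have h1 := hsc' i xstar (xs i)
      have h2 := hdesc i (xs i) μ
      have h3 : ‖a‖ ^ 2 ≤ 2 * ‖μ - xs i‖ ^ 2 + 2 * ‖xstar - xs i‖ ^ 2 := by
        have he : a = (μ - xs i) - (xstar - xs i) := by rw [ha]; abel
        rw [he, norm_sub_sq_real]
        linarith [neg_abs_le (⟪μ - xs i, xstar - xs i⟫),
          abs_real_inner_le_norm (μ - xs i) (xstar - xs i),
          sq_nonneg (‖μ - xs i‖ - ‖xstar - xs i‖)]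
      have h4 : ⟪gradient (fi i) (xs i), a⟫
          = ⟪gradient (fi i) (xs i), μ - xs i⟫ - ⟪gradient (fi i) (xs i), xstar - xs i⟫ := by
        rw [← inner_sub_right]
        congr 1
        rw [ha]; abel
      have h5 : ‖μ - xs i‖ ^ 2 = ‖xs i - μ‖ ^ 2 := by rw [← norm_neg]; congr 1; abel
      rw [h4]
      nlinarith [h1, h2, h3, hℓ]
    have hsum := Finset.sum_le_sum (fun i (_ : i ∈ Finset.univ) => hper i)
    rw [← sum_inner] at hsum
    have hlhs : ∑ i : Fin n,
        (fi i μ - fi i xstar + ℓ / 4 * ‖a‖ ^ 2 - (L + ℓ) / 2 * ‖xs i - μ‖ ^ 2)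
        = N * Fd + N * (ℓ / 4) * ‖a‖ ^ 2 - (L + ℓ) / 2 * Ssq := by
      rw [hFd, hf μ, hf xstar, hSq]
      rw [Finset.sum_sub_distrib, Finset.sum_add_distrib, Finset.sum_sub_distrib,
        Finset.sum_const, Finset.card_univ, Fintype.card_fin, nsmul_eq_mul, ← Finset.mul_sum]
      field_simp
      ring
    rw [hlhs] at hsum
    exact hsum
  -- (B) upper bound on ‖S‖²
  have hB : ‖S‖ ^ 2 ≤ 2 * N * L ^ 2 * Ssq + 4 * L * N ^ 2 * Fd := by
    set P : EuclideanSpace ℝ (Fin d) := ∑ i, (gradient (fi i) (xs i) - gradient (fi i) μ) with hP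
    set Q : EuclideanSpace ℝ (Fin d) := ∑ i, gradient (fi i) μ with hQ
    have hSPQ : S = P + Q := by
      rw [hS, hP, hQ, ← Finset.sum_add_distrib]
      exact Finset.sum_congr rfl fun i _ => by abel
    have hPQ : ‖S‖ ^ 2 ≤ 2 * ‖P‖ ^ 2 + 2 * ‖Q‖ ^ 2 := by
      rw [hSPQ, norm_add_sq_real]
      nlinarith [real_inner_le_norm P Q, norm_nonneg P, norm_nonneg Q,
        sq_nonneg (‖P‖ - ‖Q‖)]
    have hPbd : ‖P‖ ^ 2 ≤ N * (L ^ 2 * Ssq) := by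
      calc ‖P‖ ^ 2 ≤ N * ∑ i, ‖gradient (fi i) (xs i) - gradient (fi i) μ‖ ^ 2 := by
            have := norm_sum_sq_le_card_mul n (fun i => gradient (fi i) (xs i) - gradient (fi i) μ)
            exact_mod_cast this
        _ ≤ N * ∑ i, L ^ 2 * ‖xs i - μ‖ ^ 2 := by
            apply mul_le_mul_of_nonneg_left _ hN.le
            apply Finset.sum_le_sum
            intro i _
            have := hLipfi i (xs i) μ
            nlinarith [norm_nonneg (gradient (fi i) (xs i) - gradient (fi i) μ),
              norm_nonneg (xs i - μ)]
        _ = N * (L ^ 2 * Ssq) := by rw [hSq, ← Finset.mul_sum]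
    have hQbd : ‖Q‖ ^ 2 ≤ N ^ 2 * (2 * L * Fd) := by
      have h1 : gradient f μ = N⁻¹ • Q := by rw [hgfeq, hQ]
      have h2 : ‖Q‖ ^ 2 = N ^ 2 * ‖gradient f μ‖ ^ 2 := by
        rw [h1, norm_smul, mul_pow, Real.norm_eq_abs, sq_abs]
        field_simp
      rw [h2]
      exact mul_le_mul_of_nonneg_left hgradmin (by positivity)
    nlinarith [hPQ, hPbd, hQbd]
  -- expansion
  have hexp : ‖μ - xstar - c • S‖ ^ 2 = ‖a‖ ^ 2 - 2 * c * ⟪S, a⟫ + c ^ 2 * ‖S‖ ^ 2 := by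
    rw [← ha, norm_sub_sq_real, real_inner_smul_right, norm_smul, mul_pow,
      Real.norm_eq_abs, sq_abs, real_inner_comm]
    ring
  have hΓ : Γ = N⁻¹ * Ssq := rfl
  have hgoal : ‖μ - xstar - c • S‖ ^ 2
      ≤ (1 - ℓ * η / N) * ‖a‖ ^ 2 - (4 * η / N - 16 * L * η ^ 2 / N ^ 2) * Fd
        + (2 * (L + ℓ) * η / N + 8 * L ^ 2 * η ^ 2 / N ^ 2) * Γ := by
    rw [hexp, hΓ]
    have h1 := mul_le_mul_of_nonneg_left hA (by positivity : (0:ℝ) ≤ 2 * c)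
    have h2 := mul_le_mul_of_nonneg_left hB (sq_nonneg c)
    have heq : ‖a‖ ^ 2 - 2 * c * (N * Fd + N * (ℓ / 4) * ‖a‖ ^ 2 - (L + ℓ) / 2 * Ssq)
          + c ^ 2 * (2 * N * L ^ 2 * Ssq + 4 * L * N ^ 2 * Fd)
        = (1 - ℓ * η / N) * ‖a‖ ^ 2 - (4 * η / N - 16 * L * η ^ 2 / N ^ 2) * Fd
          + (2 * (L + ℓ) * η / N + 8 * L ^ 2 * η ^ 2 / N ^ 2) * (N⁻¹ * Ssq) := by
      rw [hc]
      field_simp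
      ring
    clear_value N c Ssq Fd a S
    linarith [h1, h2, heq]
  exact hgoal
end
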